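/- Let n ≥ 1, K an infinite field. The big Bruhat cell N w₀ B of GL(n,K) consists precisely of the invertible matrices X all of whose lower-left corner minors are nonzero: for each k = 1,…,n, the determinant of the submatrix of X with rows {n-k+1,…,n} and columns {1,…,k} is nonzero. -/

import Mathlib

open Matrix in
lemma lu_leading_minor {K : Type*} [Field K] {n k : ℕ} (hk : k ≤ n)
    (L U : Matrix (Fin n) (Fin n) K)
    (hL1 : ∀ i, L i i = 1) (hL0 : ∀ i j : Fin n, i < j → L i j = 0)
    (hU1 : ∀ i, U i i ≠ 0) (hU0 : ∀ i j : Fin n, j < i → U i j = 0) :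
    ((L * U).submatrix (Fin.castLE hk) (Fin.castLE hk)).det ≠ 0 := by
  set f := Fin.castLE hk with hf
  have hinj : Function.Injective f := Fin.castLE_injective hk
  have hsub : (L * U).submatrix f f = (L.submatrix f f) * (U.submatrix f f) := by
    ext i j
    simp only [Matrix.submatrix_apply, Matrix.mul_apply]
    have hm := Finset.sum_map (Finset.univ : Finset (Fin k)) ⟨f, hinj⟩
      (fun l => L (f i) l * U l (f j))
    simp only [Function.Embedding.coeFn_mk] at hm
    rw [← hm]
    symm
    apply Finset.sum_subset (Finset.subset_univ _)
    intro x _ hx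
    have hxk : k ≤ x.val := by
      by_contra h
      push_neg at h
      exact hx (Finset.mem_map.2 ⟨⟨x.val, h⟩, Finset.mem_univ _, by simp [hf, Fin.ext_iff]⟩)
    have : f i < x := by
      rw [Fin.lt_def]
      exact lt_of_lt_of_le i.isLt hxk
    rw [hL0 _ _ this, zero_mul]
  rw [hsub, Matrix.det_mul]
  have hLbt : (L.submatrix f f).BlockTriangular OrderDual.toDual := by
    intro i j hij
    exact hL0 (f i) (f j) (by rw [Fin.lt_def]; exact hij)
  have hUbt : (U.submatrix f f).BlockTriangular id := by
    intro i j hij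
    exact hU0 (f i) (f j) (by rw [Fin.lt_def]; exact hij)
  have hdL : (L.submatrix f f).det = 1 := by
    rw [Matrix.det_of_lowerTriangular _ hLbt]
    simp only [Matrix.submatrix_apply]
    simp [hL1]
  have hdU : (U.submatrix f f).det ≠ 0 := by
    rw [Matrix.det_of_upperTriangular hUbt]
    exact Finset.prod_ne_zero_iff.2 fun i _ => hU1 _
  rw [hdL, one_mul]
  exact hdU

open Matrix in
lemma lu_exists {K : Type*} [Field K] : ∀ (n : ℕ) (Y : Matrix (Fin n) (Fin n) K),
    (∀ k (hk : k ≤ n), (Y.submatrix (Fin.castLE hk) (Fin.castLE hk)).det ≠ 0) →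
    ∃ L U : Matrix (Fin n) (Fin n) K,
      (∀ i, L i i = 1) ∧ (∀ i j : Fin n, i < j → L i j = 0) ∧
      (∀ i, U i i ≠ 0) ∧ (∀ i j : Fin n, j < i → U i j = 0) ∧ Y = L * U := by
  intro n
  induction n with
  | zero =>
    intro Y _
    exact ⟨1, 1, fun i => i.elim0, fun i => i.elim0, fun i => i.elim0, fun i => i.elim0,
      by ext i; exact i.elim0⟩
  | succ n ih =>
    intro Y hY
    set e : Fin n ⊕ Fin 1 ≃ Fin (n + 1) := finSumFinEquiv with he
    set Z : Matrix (Fin n ⊕ Fin 1) (Fin n ⊕ Fin 1) K := Y.submatrix e e with hZ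
    set A := Z.toBlocks₁₁ with hA
    set c := Z.toBlocks₁₂ with hc
    set r := Z.toBlocks₂₁ with hr
    set d := Z.toBlocks₂₂ with hd
    have hAk : ∀ k (hk : k ≤ n), (A.submatrix (Fin.castLE hk) (Fin.castLE hk)).det ≠ 0 := by
      intro k hk
      have hk' : k ≤ n + 1 := by omega
      have : A.submatrix (Fin.castLE hk) (Fin.castLE hk)
          = Y.submatrix (Fin.castLE hk') (Fin.castLE hk') := by
        ext i j
        simp only [hA, Matrix.toBlocks₁₁, Matrix.submatrix_apply, hZ, Matrix.of_apply]
        congr 1 <;> · apply Fin.ext; simp [he]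
      rw [this]
      exact hY k hk'
    obtain ⟨L₀, U₀, hL₀1, hL₀0, hU₀1, hU₀0, hAeq⟩ := ih A hAk
    have hdetL₀ : L₀.det = 1 := by
      have : L₀.BlockTriangular OrderDual.toDual := fun i j hij => hL₀0 i j hij
      rw [Matrix.det_of_lowerTriangular _ this]
      simp [hL₀1]
    have hdetU₀ : U₀.det ≠ 0 := by
      have : U₀.BlockTriangular id := fun i j hij => hU₀0 i j hij
      rw [Matrix.det_of_upperTriangular this]
      exact Finset.prod_ne_zero_iff.2 fun i _ => hU₀1 _
    have hLunit : IsUnit L₀.det := by simp [hdetL₀]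
    have hUunit : IsUnit U₀.det := isUnit_iff_ne_zero.2 hdetU₀
    set x : Matrix (Fin 1) (Fin n) K := r * U₀⁻¹ with hx
    set y : Matrix (Fin n) (Fin 1) K := L₀⁻¹ * c with hy
    set s : Matrix (Fin 1) (Fin 1) K := d - x * y with hs
    set L' := Matrix.fromBlocks L₀ (0 : Matrix (Fin n) (Fin 1) K) x (1 : Matrix (Fin 1) (Fin 1) K) with hL'
    set U' := Matrix.fromBlocks U₀ y (0 : Matrix (Fin 1) (Fin n) K) s with hU'
    have hZeq : Z = L' * U' := by
      have h12 : L₀ * y = c := by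
        rw [hy, ← Matrix.mul_assoc, Matrix.mul_nonsing_inv _ hLunit, Matrix.one_mul]
      have h21 : x * U₀ = r := by
        rw [hx, Matrix.mul_assoc, Matrix.nonsing_inv_mul _ hUunit, Matrix.mul_one]
      have h22 : x * y + s = d := by rw [hs]; abel
      rw [hL', hU', Matrix.fromBlocks_multiply]
      simp only [Matrix.mul_zero, Matrix.zero_mul, Matrix.one_mul, Matrix.mul_one,
        add_zero, zero_add]
      rw [h12, h21, h22, ← hAeq]
      exact (Matrix.fromBlocks_toBlocks Z).symm
    have hdetZ : Z.det ≠ 0 := by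
      rw [hZ, Matrix.det_submatrix_equiv_self]
      have := hY (n+1) (le_refl _)
      have hid : Y.submatrix (Fin.castLE (le_refl (n+1))) (Fin.castLE (le_refl (n+1))) = Y := by
        ext i j; congr 1 <;> exact Fin.ext rfl
      rwa [hid] at this
    have hs0 : s 0 0 ≠ 0 := by
      have : Z.det = L₀.det * (U₀.det * s.det) := by
        rw [hZeq, Matrix.det_mul, hL', hU', Matrix.det_fromBlocks_zero₁₂,
          Matrix.det_fromBlocks_zero₂₁, Matrix.det_one, mul_one]
      rw [hdetL₀, one_mul] at this
      have hsdet : s.det ≠ 0 := by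
        intro h0
        rw [h0, mul_zero] at this
        exact hdetZ this
      rwa [Matrix.det_fin_one] at hsdet
    refine ⟨L'.submatrix e.symm e.symm, U'.submatrix e.symm e.symm, ?_, ?_, ?_, ?_, ?_⟩
    · intro i
      simp only [Matrix.submatrix_apply]
      rcases (e.symm i) with a | z
      · exact hL₀1 a
      · simp [hL']
    · intro i j hij
      have hi : i = e (e.symm i) := (e.apply_symm_apply i).symm
      have hj : j = e (e.symm j) := (e.apply_symm_apply j).symm
      simp only [Matrix.submatrix_apply]
      rcases hea : (e.symm i) with a | z <;> rcases heb : (e.symm j) with b | w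
      · refine hL₀0 a b ?_
        rw [hi, hj, hea, heb] at hij
        rw [Fin.lt_def] at hij ⊢
        simpa [he] using hij
      · simp [hL']
      · exfalso
        rw [hi, hj, hea, heb] at hij
        rw [Fin.lt_def] at hij
        simp only [he, finSumFinEquiv_apply_left, finSumFinEquiv_apply_right] at hij
        have : (Fin.natAdd n z).val = n + z.val := rfl
        have hb := b.isLt
        have hz : z.val = 0 := by omega
        have : (Fin.castAdd 1 b).val = b.val := rfl
        omega
      · exfalso
        rw [hi, hj, hea, heb] at hij
        rw [Fin.lt_def] at hij
        have hz : z = w := Subsingleton.elim z w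
        rw [hz] at hij
        exact lt_irrefl _ hij
    · intro i
      simp only [Matrix.submatrix_apply]
      rcases (e.symm i) with a | z
      · exact hU₀1 a
      · have : z = 0 := Subsingleton.elim z 0
        rw [this]
        simpa [hU'] using hs0
    · intro i j hij
      have hi : i = e (e.symm i) := (e.apply_symm_apply i).symm
      have hj : j = e (e.symm j) := (e.apply_symm_apply j).symm
      simp only [Matrix.submatrix_apply]
      rcases hea : (e.symm i) with a | z <;> rcases heb : (e.symm j) with b | w
      · refine hU₀0 a b ?_
        rw [hi, hj, hea, heb] at hij
        rw [Fin.lt_def] at hij ⊢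
        simpa [he] using hij
      · exfalso
        rw [hi, hj, hea, heb] at hij
        rw [Fin.lt_def] at hij
        simp only [he, finSumFinEquiv_apply_left, finSumFinEquiv_apply_right] at hij
        have : (Fin.natAdd n w).val = n + w.val := rfl
        have ha := a.isLt
        have hw : w.val = 0 := by omega
        have : (Fin.castAdd 1 a).val = a.val := rfl
        omega
      · simp [hU']
      · exfalso
        rw [hi, hj, hea, heb] at hij
        rw [Fin.lt_def] at hij
        have hz : z = w := Subsingleton.elim z w
        rw [hz] at hij
        exact lt_irrefl _ hij
    · have : Y = Z.submatrix e.symm e.symm := by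
        rw [hZ]
        simp [Matrix.submatrix_submatrix]
      rw [this, hZeq, ← Matrix.submatrix_mul_equiv L' U' _ e.symm _]

section Aux
variable {K : Type*} [Field K] {n : ℕ}

lemma w0_eq_left (w₀ : Matrix (Fin n) (Fin n) K)
    (hw : ∀ i j : Fin n, w₀ i j = if (i : ℕ) + (j : ℕ) + 1 = n then 1 else 0) :
    w₀ = (1 : Matrix (Fin n) (Fin n) K).submatrix Fin.rev id := by
  ext i j
  have hiff : ((i : ℕ) + (j : ℕ) + 1 = n) ↔ (Fin.rev i = j) := by
    rw [Fin.ext_iff, Fin.val_rev]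
    have := i.isLt; have := j.isLt
    omega
  rw [hw, Matrix.submatrix_apply, Matrix.one_apply, if_congr hiff rfl rfl]
  rfl

lemma w0_eq_right (w₀ : Matrix (Fin n) (Fin n) K)
    (hw : ∀ i j : Fin n, w₀ i j = if (i : ℕ) + (j : ℕ) + 1 = n then 1 else 0) :
    w₀ = (1 : Matrix (Fin n) (Fin n) K).submatrix id Fin.rev := by
  ext i j
  have hiff : ((i : ℕ) + (j : ℕ) + 1 = n) ↔ (i = Fin.rev j) := by
    rw [Fin.ext_iff, Fin.val_rev]
    have := i.isLt; have := j.isLt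
    omega
  rw [hw, Matrix.submatrix_apply, Matrix.one_apply, if_congr hiff rfl rfl]
  rfl

lemma mulw_left (w₀ : Matrix (Fin n) (Fin n) K)
    (hw : ∀ i j : Fin n, w₀ i j = if (i : ℕ) + (j : ℕ) + 1 = n then 1 else 0)
    (M : Matrix (Fin n) (Fin n) K) : w₀ * M = M.submatrix Fin.rev id := by
  have h := Matrix.submatrix_mul_equiv (1 : Matrix (Fin n) (Fin n) K) M
    Fin.rev (Equiv.refl (Fin n)) id
  simp only [Equiv.coe_refl, Matrix.submatrix_id_id, Matrix.one_mul] at h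
  rw [w0_eq_left w₀ hw, h]

lemma mulw_right (w₀ : Matrix (Fin n) (Fin n) K)
    (hw : ∀ i j : Fin n, w₀ i j = if (i : ℕ) + (j : ℕ) + 1 = n then 1 else 0)
    (M : Matrix (Fin n) (Fin n) K) : M * w₀ = M.submatrix id Fin.rev := by
  have h := Matrix.submatrix_mul_equiv M (1 : Matrix (Fin n) (Fin n) K)
    id (Equiv.refl (Fin n)) Fin.rev
  simp only [Equiv.coe_refl, Matrix.submatrix_id_id, Matrix.mul_one] at h
  rw [w0_eq_right w₀ hw, h]

lemma w0_sq (w₀ : Matrix (Fin n) (Fin n) K)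
    (hw : ∀ i j : Fin n, w₀ i j = if (i : ℕ) + (j : ℕ) + 1 = n then 1 else 0) :
    w₀ * w₀ = 1 := by
  rw [mulw_left w₀ hw, w0_eq_right w₀ hw]
  ext i j
  simp only [Matrix.submatrix_apply, id_eq]
  rw [Matrix.one_apply, Matrix.one_apply]
  have : (id i.rev = j.rev) ↔ (i = j) := by simp [Fin.rev_inj]
  rw [if_congr this rfl rfl]

lemma conj_apply (w₀ : Matrix (Fin n) (Fin n) K)
    (hw : ∀ i j : Fin n, w₀ i j = if (i : ℕ) + (j : ℕ) + 1 = n then 1 else 0)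
    (M : Matrix (Fin n) (Fin n) K) (i j : Fin n) :
    (w₀ * M * w₀) i j = M i.rev j.rev := by
  rw [mulw_left w₀ hw, mulw_right w₀ hw]
  simp [Matrix.submatrix_apply]

lemma det_rev_ne_zero_iff {m : ℕ} (M : Matrix (Fin m) (Fin m) K) :
    (M.submatrix Fin.rev id).det ≠ 0 ↔ M.det ≠ 0 := by
  have hcoe : (Fin.rev : Fin m → Fin m) = ⇑(Fin.revPerm) := rfl
  rw [hcoe, Matrix.det_permute]
  constructor
  · intro h h0; rw [h0, mul_zero] at h; exact h rfl
  · intro h h0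
    rcases Int.units_eq_one_or (Equiv.Perm.sign Fin.revPerm) with hs | hs <;>
      rw [hs] at h0 <;> simp at h0 <;> exact h h0

lemma w0_det_unit (w₀ : Matrix (Fin n) (Fin n) K)
    (hw : ∀ i j : Fin n, w₀ i j = if (i : ℕ) + (j : ℕ) + 1 = n then 1 else 0) :
    IsUnit w₀.det := by
  rw [w0_eq_left w₀ hw]
  have hcoe : (Fin.rev : Fin n → Fin n) = ⇑(Fin.revPerm) := rfl
  rw [hcoe, Matrix.det_permute, Matrix.det_one, mul_one]
  rcases Int.units_eq_one_or (Equiv.Perm.sign (Fin.revPerm (n := n))) with hs | hs <;>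
    rw [hs] <;> simp

end Aux

section Main
variable {K : Type*} [Field K] {n : ℕ}

lemma minor_translate (w₀ X : Matrix (Fin n) (Fin n) K)
    (hw : ∀ i j : Fin n, w₀ i j = if (i : ℕ) + (j : ℕ) + 1 = n then 1 else 0)
    {k : ℕ} (hk2 : k ≤ n) :
    (w₀ * X).submatrix (Fin.castLE hk2) (Fin.castLE hk2)
      = ((X.submatrix
          (fun t : Fin k => (⟨n - k + t.val, (by have := t.isLt; omega : n - k + t.val < n + 0)⟩ : Fin n))
          (fun t : Fin k => (⟨t.val, (by have := t.isLt; omega : t.val < n + 0)⟩ : Fin n))).submatrix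
            Fin.rev id) := by
  ext i j
  rw [mulw_left w₀ hw]
  simp only [Matrix.submatrix_apply, id_eq]
  congr 1
  · apply Fin.ext
    simp only [Fin.val_rev, Fin.coe_castLE]
    have := i.isLt
    omega

end Main

/-- the big Bruhat cell N w₀ B of GL(n,K) consists exactly of the invertible
matrices all of whose lower-left corner minors (last k rows, first k columns, 1 ≤ k ≤ n)
are nonzero. -/
theorem stmt12 {K : Type*} [Field K] [Infinite K] {n : ℕ} (hn : 1 ≤ n)
    (w₀ : Matrix (Fin n) (Fin n) K)
    (hw : ∀ i j : Fin n, w₀ i j = if (i : ℕ) + (j : ℕ) + 1 = n then 1 else 0)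
    (X : Matrix (Fin n) (Fin n) K) :
    (∃ u b : Matrix (Fin n) (Fin n) K,
      (∀ i, u i i = 1) ∧ (∀ i j : Fin n, j < i → u i j = 0) ∧
      (∀ i, b i i ≠ 0) ∧ (∀ i j : Fin n, j < i → b i j = 0) ∧
      X = u * w₀ * b) ↔
    (IsUnit X.det ∧ ∀ k : ℕ, 1 ≤ k → ∀ hk2 : k ≤ n,
      (X.submatrix
        (fun t : Fin k => (⟨n - k + t.val, by have := t.isLt; omega⟩ : Fin n))
        (fun t : Fin k => (⟨t.val, by have := t.isLt; omega⟩ : Fin n))).det ≠ 0) := by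
  have hww := w0_sq w₀ hw
  constructor
  · rintro ⟨u, b, hu1, hu0, hb1, hb0, hXeq⟩
    have hL1 : ∀ i, (w₀ * u * w₀) i i = 1 := fun i => by
      rw [conj_apply w₀ hw]; exact hu1 _
    have hL0 : ∀ i j : Fin n, i < j → (w₀ * u * w₀) i j = 0 := fun i j hij => by
      rw [conj_apply w₀ hw]; exact hu0 _ _ (Fin.rev_lt_rev.mpr hij)
    have hYeq : w₀ * X = (w₀ * u * w₀) * b := by
      rw [hXeq, ← Matrix.mul_assoc, ← Matrix.mul_assoc]
    constructor
    · rw [hXeq, Matrix.det_mul, Matrix.det_mul]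
      have hdu : u.det = 1 := by
        rw [Matrix.det_of_upperTriangular (fun i j hij => hu0 i j hij)]
        simp [hu1]
      have hdb : b.det ≠ 0 := by
        rw [Matrix.det_of_upperTriangular (fun i j hij => hb0 i j hij)]
        exact Finset.prod_ne_zero_iff.2 fun i _ => hb1 _
      exact ((hdu ▸ isUnit_one).mul (w0_det_unit w₀ hw)).mul (isUnit_iff_ne_zero.2 hdb)
    · intro k hk1 hk2
      have hmin := lu_leading_minor hk2 (w₀ * u * w₀) b hL1 hL0 hb1 hb0
      rw [← hYeq, minor_translate w₀ X hw hk2] at hmin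
      exact (det_rev_ne_zero_iff _).mp hmin
  · rintro ⟨hdet, hmin⟩
    have hYmin : ∀ k (hk : k ≤ n),
        (((w₀ * X).submatrix (Fin.castLE hk) (Fin.castLE hk)).det ≠ 0) := by
      intro k hk
      rcases Nat.eq_zero_or_pos k with h0 | h1
      · subst h0
        rw [Matrix.det_isEmpty]
        exact one_ne_zero
      · rw [minor_translate w₀ X hw hk]
        exact (det_rev_ne_zero_iff _).mpr (hmin k h1 hk)
    obtain ⟨L, U, hL1, hL0, hU1, hU0, hYeq⟩ := lu_exists n (w₀ * X) hYmin
    refine ⟨w₀ * L * w₀, U, ?_, ?_, hU1, hU0, ?_⟩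
    · intro i; rw [conj_apply w₀ hw]; exact hL1 _
    · intro i j hij; rw [conj_apply w₀ hw]; exact hL0 _ _ (Fin.rev_lt_rev.mpr hij)
    · rw [Matrix.mul_assoc (w₀ * L) w₀ w₀, hww, Matrix.mul_one,
        Matrix.mul_assoc, ← hYeq, ← Matrix.mul_assoc, hww, Matrix.one_mul]
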